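/- Let k > 0 and for i = 1, 2 let f_i, g_i : [0, k] → ℝ be continuously differentiable with f_i'(s)² + g_i'(s)² = 1 for all s ∈ [0, k], f_i(0) = g_i(0) = 0, g_i'(s) ≠ 0 for all s ∈ [0, k] (no horizontal tangents), and f_i'(s) ≠ 0 for all s ∈ (0, k) (vertical tangents only possible at the endpoints). If for every t ∈ [0, 1] and every s ∈ [0, k] one has (1−t²)·f₁'(s)² + g₁'(s)² = (1−t²)·f₂'(s)² + g₂'(s)², then there exist signs ε, δ ∈ {−1, +1} such that f₂(s) = ε·f₁(s) and g₂(s) = δ·g₁(s) for all s ∈ [0, k]; i.e., the second curve is obtained from the first by the identity, the reflection in the X-axis, the reflection in the Z-axis, or a 180° rotation. -/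

import Mathlib

open Set

/-- A continuous function nonzero on `Icc a b` has constant sign there. -/
lemma sign_const_aux {a b : ℝ} {P : ℝ → ℝ} (hP : ContinuousOn P (Set.Icc a b))
    (hne : ∀ s ∈ Set.Icc a b, P s ≠ 0) {x y : ℝ} (hx : x ∈ Set.Icc a b)
    (hy : y ∈ Set.Icc a b) (hPx : 0 < P x) : 0 < P y := by
  by_contra hneg
  push_neg at hneg
  have hsub : Set.uIcc x y ⊆ Set.Icc a b := Set.uIcc_subset_Icc hx hy
  have := intermediate_value_uIcc (hP.mono hsub)
  have h0 : (0 : ℝ) ∈ Set.uIcc (P x) (P y) := by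
    rcases lt_or_eq_of_le hneg with h | h
    · exact Set.mem_uIcc.2 (Or.inr ⟨h.le, hPx.le⟩)
    · exact absurd h (hne y hy)
  obtain ⟨c, hc, hc0⟩ := this h0
  exact hne c (hsub hc) hc0

lemma sign_case_pos {a b : ℝ} (hsq : b ^ 2 = a ^ 2) (hpos : 0 < a * b) : b = a := by
  have h0 : (b - a) * (b + a) = 0 := by ring_nf; linear_combination hsq
  rcases mul_eq_zero.mp h0 with h | h
  · linarith [sub_eq_zero.mp h]
  · have hb : b = -a := by linarith
    nlinarith [sq_nonneg a]

lemma sign_case_neg {a b : ℝ} (hsq : b ^ 2 = a ^ 2) (hneg : a * b < 0) : b = -a := by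
  have h0 : (b - a) * (b + a) = 0 := by ring_nf; linear_combination hsq
  rcases mul_eq_zero.mp h0 with h | h
  · have hb : b = a := by linarith [sub_eq_zero.mp h]
    nlinarith [sq_nonneg a]
  · linarith

theorem two_segment_cross_section (k : ℝ) (hk : 0 < k)
    (f₁ g₁ f₂ g₂ f₁' g₁' f₂' g₂' : ℝ → ℝ)
    (hf₁ : ∀ s ∈ Set.Icc (0 : ℝ) k, HasDerivWithinAt f₁ (f₁' s) (Set.Icc 0 k) s)
    (hg₁ : ∀ s ∈ Set.Icc (0 : ℝ) k, HasDerivWithinAt g₁ (g₁' s) (Set.Icc 0 k) s)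
    (hf₂ : ∀ s ∈ Set.Icc (0 : ℝ) k, HasDerivWithinAt f₂ (f₂' s) (Set.Icc 0 k) s)
    (hg₂ : ∀ s ∈ Set.Icc (0 : ℝ) k, HasDerivWithinAt g₂ (g₂' s) (Set.Icc 0 k) s)
    (hf₁c : ContinuousOn f₁' (Set.Icc 0 k)) (hg₁c : ContinuousOn g₁' (Set.Icc 0 k))
    (hf₂c : ContinuousOn f₂' (Set.Icc 0 k)) (hg₂c : ContinuousOn g₂' (Set.Icc 0 k))
    (hunit₁ : ∀ s ∈ Set.Icc (0 : ℝ) k, f₁' s ^ 2 + g₁' s ^ 2 = 1)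
    (hunit₂ : ∀ s ∈ Set.Icc (0 : ℝ) k, f₂' s ^ 2 + g₂' s ^ 2 = 1)
    (hstart₁ : f₁ 0 = 0 ∧ g₁ 0 = 0) (hstart₂ : f₂ 0 = 0 ∧ g₂ 0 = 0)
    (hhoriz₁ : ∀ s ∈ Set.Icc (0 : ℝ) k, g₁' s ≠ 0)
    (hhoriz₂ : ∀ s ∈ Set.Icc (0 : ℝ) k, g₂' s ≠ 0)
    (hvert₁ : ∀ s ∈ Set.Ioo (0 : ℝ) k, f₁' s ≠ 0)
    (hvert₂ : ∀ s ∈ Set.Ioo (0 : ℝ) k, f₂' s ≠ 0)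
    (heq : ∀ t ∈ Set.Icc (0 : ℝ) 1, ∀ s ∈ Set.Icc (0 : ℝ) k,
      (1 - t ^ 2) * f₁' s ^ 2 + g₁' s ^ 2 = (1 - t ^ 2) * f₂' s ^ 2 + g₂' s ^ 2) :
    ∃ ε δ : ℝ, (ε = 1 ∨ ε = -1) ∧ (δ = 1 ∨ δ = -1) ∧
      ∀ s ∈ Set.Icc (0 : ℝ) k, f₂ s = ε * f₁ s ∧ g₂ s = δ * g₁ s := by
  obtain ⟨hf₁0, hg₁0⟩ := hstart₁
  obtain ⟨hf₂0, hg₂0⟩ := hstart₂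
  -- squared derivatives agree
  have hgsq : ∀ s ∈ Set.Icc (0 : ℝ) k, g₂' s ^ 2 = g₁' s ^ 2 := by
    intro s hs
    have := heq 1 (by norm_num) s hs
    linarith
  have hfsq : ∀ s ∈ Set.Icc (0 : ℝ) k, f₂' s ^ 2 = f₁' s ^ 2 := by
    intro s hs
    have h1 := hunit₁ s hs
    have h2 := hunit₂ s hs
    have := hgsq s hs
    linarith
  -- sign for g
  have h0mem : (0 : ℝ) ∈ Set.Icc (0 : ℝ) k := ⟨le_refl _, hk.le⟩
  set Pg : ℝ → ℝ := fun s => g₁' s * g₂' s with hPg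
  have hPgc : ContinuousOn Pg (Set.Icc 0 k) := hg₁c.mul hg₂c
  have hPgne : ∀ s ∈ Set.Icc (0 : ℝ) k, Pg s ≠ 0 := fun s hs =>
    mul_ne_zero (hhoriz₁ s hs) (hhoriz₂ s hs)
  set δ : ℝ := if 0 < Pg 0 then 1 else -1 with hδdef
  have hδval : δ = 1 ∨ δ = -1 := by
    by_cases h : 0 < Pg 0 <;> simp [hδdef, h]
  have hgder : ∀ s ∈ Set.Icc (0 : ℝ) k, g₂' s = δ * g₁' s := by
    intro s hs
    have hsq := hgsq s hs
    by_cases h : 0 < Pg 0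
    · have hpos : 0 < Pg s := sign_const_aux hPgc hPgne h0mem hs h
      have : δ = 1 := by simp [hδdef, h]
      rw [this]
      have hp : 0 < g₁' s * g₂' s := hpos
      have := sign_case_pos hsq hp
      linarith
    · have hneg : 0 < -Pg 0 := by
        rcases lt_trichotomy (Pg 0) 0 with h' | h' | h'
        · linarith
        · exact absurd h' (hPgne 0 h0mem)
        · exact absurd h' h
      have hpos : 0 < -Pg s := by
        have := sign_const_aux (P := fun s => -Pg s) hPgc.neg
          (fun s hs => neg_ne_zero.2 (hPgne s hs)) h0mem hs hneg
        exact this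
      have : δ = -1 := by simp [hδdef, h]
      rw [this]
      have hprod : g₁' s * g₂' s < 0 := by
        have : Pg s < 0 := by linarith
        exact this
      have := sign_case_neg hsq hprod
      linarith
    -- sign for f on the interior
  have hmid : k / 2 ∈ Set.Ioo (0 : ℝ) k := ⟨by linarith, by linarith⟩
  have hmidI : k / 2 ∈ Set.Icc (0 : ℝ) k := Set.Ioo_subset_Icc_self hmid
  set Pf : ℝ → ℝ := fun s => f₁' s * f₂' s with hPf
  have hPfc : ContinuousOn Pf (Set.Icc 0 k) := hf₁c.mul hf₂c
  set ε : ℝ := if 0 < Pf (k / 2) then 1 else -1 with hεdef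
  have hεval : ε = 1 ∨ ε = -1 := by
    by_cases h : 0 < Pf (k / 2) <;> simp [hεdef, h]
  have hfderIoo : ∀ s ∈ Set.Ioo (0 : ℝ) k, f₂' s = ε * f₁' s := by
    intro s hs
    have hsI : s ∈ Set.Icc (0 : ℝ) k := Set.Ioo_subset_Icc_self hs
    have hsq := hfsq s hsI
    have hIoosub : Set.Icc (min s (k/2)) (max s (k/2)) ⊆ Set.Ioo (0:ℝ) k := by
      intro x hx
      constructor
      · calc (0:ℝ) < min s (k/2) := lt_min hs.1 hmid.1
          _ ≤ x := hx.1
      · calc x ≤ max s (k/2) := hx.2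
          _ < k := max_lt hs.2 hmid.2
    have hsubI : Set.Icc (min s (k/2)) (max s (k/2)) ⊆ Set.Icc (0:ℝ) k :=
      fun x hx => Set.Ioo_subset_Icc_self (hIoosub hx)
    have hPfc' : ContinuousOn Pf (Set.Icc (min s (k/2)) (max s (k/2))) := hPfc.mono hsubI
    have hPfne' : ∀ x ∈ Set.Icc (min s (k/2)) (max s (k/2)), Pf x ≠ 0 := fun x hx =>
      mul_ne_zero (hvert₁ x (hIoosub hx)) (hvert₂ x (hIoosub hx))
    have hsmem : s ∈ Set.Icc (min s (k/2)) (max s (k/2)) :=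
      ⟨min_le_left _ _, le_max_left _ _⟩
    have hmmem : k/2 ∈ Set.Icc (min s (k/2)) (max s (k/2)) :=
      ⟨min_le_right _ _, le_max_right _ _⟩
    by_cases h : 0 < Pf (k / 2)
    · have hpos : 0 < Pf s := sign_const_aux hPfc' hPfne' hmmem hsmem h
      have : ε = 1 := by simp [hεdef, h]
      rw [this]
      have hp : 0 < f₁' s * f₂' s := hpos
      have := sign_case_pos hsq hp
      linarith
    · have hneg : 0 < -Pf (k/2) := by
        rcases lt_trichotomy (Pf (k/2)) 0 with h' | h' | h'
        · linarith
        · exact absurd h' (hPfne' _ hmmem)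
        · exact absurd h' h
      have hpos : 0 < -Pf s :=
        sign_const_aux (P := fun x => -Pf x) hPfc'.neg
          (fun x hx => neg_ne_zero.2 (hPfne' x hx)) hmmem hsmem hneg
      have : ε = -1 := by simp [hεdef, h]
      rw [this]
      have hprod : f₁' s * f₂' s < 0 := by
        have : Pf s < 0 := by linarith
        exact this
      have := sign_case_neg hsq hprod
      linarith
  -- extend to the closed interval by continuity
  have hfder : ∀ s ∈ Set.Icc (0 : ℝ) k, f₂' s = ε * f₁' s := by
    intro s hs
    set F : ℝ → ℝ := fun x => f₂' x - ε * f₁' x with hF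
    have hFc : ContinuousOn F (Set.Icc 0 k) := hf₂c.sub (continuousOn_const.mul hf₁c)
    have hFzero : ∀ x ∈ Set.Ioo (0:ℝ) k, F x = 0 := by
      intro x hx
      simp [hF, hfderIoo x hx]
    have hcl : s ∈ closure (Set.Ioo (0:ℝ) k) := by
      rw [closure_Ioo hk.ne]
      exact hs
    have hnb : (nhdsWithin s (Set.Ioo (0:ℝ) k)).NeBot :=
      mem_closure_iff_nhdsWithin_neBot.mp hcl
    have ht1 : Filter.Tendsto F (nhdsWithin s (Set.Ioo (0:ℝ) k)) (nhds (F s)) :=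
      ((hFc.continuousWithinAt hs).mono Set.Ioo_subset_Icc_self)
    have ht2 : Filter.Tendsto F (nhdsWithin s (Set.Ioo (0:ℝ) k)) (nhds 0) := by
      refine Filter.Tendsto.congr' ?_ tendsto_const_nhds
      filter_upwards [self_mem_nhdsWithin] with x hx
      exact (hFzero x hx).symm
    have : F s = 0 := tendsto_nhds_unique ht1 ht2
    have : f₂' s - ε * f₁' s = 0 := this
    linarith
  -- integrate
  have key : ∀ (F G : ℝ → ℝ) (F' G' : ℝ → ℝ) (c : ℝ),
      (∀ s ∈ Set.Icc (0 : ℝ) k, HasDerivWithinAt F (F' s) (Set.Icc 0 k) s) →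
      (∀ s ∈ Set.Icc (0 : ℝ) k, HasDerivWithinAt G (G' s) (Set.Icc 0 k) s) →
      (∀ s ∈ Set.Icc (0 : ℝ) k, F' s = c * G' s) →
      F 0 = 0 → G 0 = 0 →
      ∀ s ∈ Set.Icc (0 : ℝ) k, F s = c * G s := by
    intro F G F' G' c hF hG hder hF0 hG0 s hs
    set H : ℝ → ℝ := fun x => F x - c * G x with hH
    have hHder : ∀ x ∈ Set.Icc (0:ℝ) k, HasDerivWithinAt H 0 (Set.Icc 0 k) x := by
      intro x hx
      have := (hF x hx).sub ((hG x hx).const_mul c)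
      have h0 : F' x - c * G' x = 0 := by rw [hder x hx]; ring
      rw [h0] at this
      exact this
    have hHdiff : DifferentiableOn ℝ H (Set.Icc 0 k) := fun x hx =>
      (hHder x hx).differentiableWithinAt
    have hud : UniqueDiffOn ℝ (Set.Icc (0:ℝ) k) := uniqueDiffOn_Icc hk
    have hHd0 : ∀ x ∈ Set.Ico (0:ℝ) k, derivWithin H (Set.Icc 0 k) x = 0 := by
      intro x hx
      exact (hHder x (Set.Ico_subset_Icc_self hx)).derivWithin
        (hud x (Set.Ico_subset_Icc_self hx))
    have := constant_of_derivWithin_zero hHdiff hHd0 s hs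
    have hH0 : H 0 = 0 := by simp [hH, hF0, hG0]
    have : H s = 0 := by rw [this, hH0]
    have : F s - c * G s = 0 := this
    linarith
  refine ⟨ε, δ, hεval, hδval, fun s hs => ⟨?_, ?_⟩⟩
  · exact key f₂ f₁ f₂' f₁' ε hf₂ hf₁ hfder hf₂0 hf₁0 s hs
  · exact key g₂ g₁ g₂' g₁' δ hg₂ hg₁ hgder hg₂0 hg₁0 s hs
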